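/- Let k be a field, let m, p ≥ 1 and n = m + p, and assume (n−1)! ≠ 0 in k. Let f : Fin m → Polynomial k be linearly independent over k with each f i of degree < n, and let s : Fin (m*p) → k be pairwise distinct scalars. Then there exists a nonzero c ∈ k such that Wr(f) = c • ∏_{i ∈ Fin (m*p)} (X − C (s i)) if and only if for every i ∈ Fin (m*p), the k-span of {f 0, …, f (m−1)} intersects E_p(s i) nontrivially. -/

import Mathlib

open Polynomial

/-- The Wronskian of a family `f : Fin m → Polynomial k`. -/
noncomputable def Wr {k : Type*} [Field k] {m : ℕ} (f : Fin m → Polynomial k) : Polynomial k :=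
  Matrix.det (Matrix.of fun i j : Fin m => Polynomial.derivative^[(i : ℕ)] (f j))

/-- The plane `E_p(s)`: the span of `(X - C s)^j` for `m ≤ j ≤ m + p - 1`. -/
noncomputable def Eplane {k : Type*} [Field k] (m p : ℕ) (s : k) : Submodule k (Polynomial k) :=
  Submodule.span k
    ((fun j : ℕ => (Polynomial.X - Polynomial.C s) ^ j) '' {j | m ≤ j ∧ j ≤ m + p - 1})

section AuxLemmas
variable {k : Type*} [Field k]

variable {k : Type*} [Field k]

private lemma sum_range_card_le : ∀ (c : ℕ) (S : Finset ℕ), S.card = c →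
    ∑ i ∈ Finset.range c, i ≤ ∑ a ∈ S, a := by
  intro c
  induction c with
  | zero => intro S h; simp
  | succ c ih =>
    intro S h
    have hne : S.Nonempty := by rw [← Finset.card_pos, h]; omega
    have hmem : S.max' hne ∈ S := S.max'_mem hne
    have hcard : (S.erase (S.max' hne)).card = c := by
      rw [Finset.card_erase_of_mem hmem, h]; omega
    have hsub : S ⊆ Finset.range (S.max' hne + 1) := fun a ha =>
      Finset.mem_range.mpr (Nat.lt_succ_of_le (S.le_max' a ha))
    have hMc : c ≤ S.max' hne := by
      have := Finset.card_le_card hsub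
      rw [h, Finset.card_range] at this; omega
    have h2 := ih (S.erase (S.max' hne)) hcard
    rw [Finset.sum_range_succ]
    calc ∑ i ∈ Finset.range c, i + c ≤ (∑ a ∈ S.erase (S.max' hne), a) + S.max' hne :=
          add_le_add h2 hMc
      _ = ∑ a ∈ S, a := Finset.sum_erase_add S _ hmem

private lemma sum_triangle_le {m : ℕ} (e : Fin m → ℕ) (he : Function.Injective e) :
    ∑ i : Fin m, (i : ℕ) ≤ ∑ j, e j := by
  have h1 : (Finset.univ.image e).card = m := by
    rw [Finset.card_image_of_injective _ he, Finset.card_univ, Fintype.card_fin]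
  have h2 := sum_range_card_le m (Finset.univ.image e) h1
  rw [Finset.sum_image (fun a _ b _ hab => he hab)] at h2
  calc ∑ i : Fin m, (i : ℕ) = ∑ i ∈ Finset.range m, i :=
        Fin.sum_univ_eq_sum_range (fun i => i) m
    _ ≤ _ := h2

private lemma coeff_prod' {ι : Type*} (s : Finset ι) (q : ι → k[X]) (t : ι → ℕ)
    (h : ∀ i ∈ s, (q i).natDegree ≤ t i) :
    (∏ i ∈ s, q i).coeff (∑ i ∈ s, t i) = ∏ i ∈ s, (q i).coeff (t i) := by
  induction s using Finset.cons_induction with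
  | empty => simp
  | cons a s ha ih =>
    rw [Finset.prod_cons, Finset.sum_cons, Finset.prod_cons,
      ← ih (fun i hi => h i (Finset.mem_cons_of_mem hi)),
      coeff_mul_add_eq_of_natDegree_le (h a (Finset.mem_cons_self a s))
        ((natDegree_prod_le _ _).trans
          (Finset.sum_le_sum (fun i hi => h i (Finset.mem_cons_of_mem hi))))]

private lemma iterate_derivative_combination {m : ℕ} (f : Fin m → k[X]) (v : Fin m → k) (t : ℕ) :
    derivative^[t] (∑ j, v j • f j) = ∑ j, v j • derivative^[t] (f j) := by
  induction t with
  | zero => simp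
  | succ t ih =>
    rw [Function.iterate_succ_apply', ih, derivative_sum]
    refine Finset.sum_congr rfl fun x _ => ?_
    rw [derivative_smul, Function.iterate_succ_apply']

private lemma cast_factorial_ne {n a : ℕ} (hfac : ((Nat.factorial (n - 1) : k)) ≠ 0)
    (ha : 0 < a) (han : a ≤ n - 1) : (a : k) ≠ 0 := by
  intro h
  obtain ⟨b, hb⟩ := Nat.dvd_factorial ha han
  apply hfac; rw [hb, Nat.cast_mul, h, zero_mul]

private lemma cast_ne_cast {n a b : ℕ} (hfac : ((Nat.factorial (n - 1) : k)) ≠ 0)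
    (ha : a ≤ n - 1) (hb : b ≤ n - 1) (hab : a ≠ b) : (a : k) ≠ (b : k) := by
  intro h
  rcases Nat.lt_or_ge a b with hlt | hge
  · have : ((b - a : ℕ) : k) = 0 := by rw [Nat.cast_sub hlt.le, h, sub_self]
    exact cast_factorial_ne hfac (by omega) (by omega) this
  · have hlt : b < a := by omega
    have : ((a - b : ℕ) : k) = 0 := by rw [Nat.cast_sub hlt.le, ← h, sub_self]
    exact cast_factorial_ne hfac (by omega) (by omega) this


variable {k : Type*} [Field k]

private lemma iterate_derivative_combination' {m : ℕ} (f : Fin m → k[X]) (v : Fin m → k) (t : ℕ) :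
    derivative^[t] (∑ j, v j • f j) = ∑ j, v j • derivative^[t] (f j) := by
  induction t with
  | zero => simp
  | succ t ih =>
    rw [Function.iterate_succ_apply', ih, derivative_sum]
    refine Finset.sum_congr rfl fun x _ => ?_
    rw [derivative_smul, Function.iterate_succ_apply']

private lemma eval_Wr {m : ℕ} (f : Fin m → k[X]) (s : k) :
    (Wr f).eval s = (Matrix.of fun i j : Fin m => (derivative^[(i : ℕ)] (f j)).eval s).det := by
  rw [Wr, show (Polynomial.eval s : k[X] → k) = ⇑(Polynomial.evalRingHom s) from rfl,
    RingHom.map_det]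
  congr 1

private lemma mem_Eplane_of {m p n : ℕ} (hm : 1 ≤ m) (hp : 1 ≤ p) (hn : n = m + p)
    (hfac : ((Nat.factorial (n - 1) : k) ≠ 0)) {g : k[X]} (hg : g.degree < n) (s : k)
    (hder : ∀ i : ℕ, i < m → (derivative^[i] g).eval s = 0) : g ∈ Eplane m p s := by
  rcases eq_or_ne g 0 with rfl | hg0
  · exact Submodule.zero_mem _
  have hnat : g.natDegree < n := (natDegree_lt_iff_degree_lt hg0).mpr hg
  have htay : ∀ i : ℕ, i < m → (Polynomial.taylor s g).coeff i = 0 := by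
    intro i him
    have h2 : derivative^[i] g = i.factorial • Polynomial.hasseDeriv i g := by
      rw [← Polynomial.factorial_smul_hasseDeriv]; rfl
    have h3 := hder i him
    rw [h2, nsmul_eq_mul] at h3
    rw [eval_mul, eval_natCast] at h3
    have hfi : (i.factorial : k) ≠ 0 := by
      intro h
      obtain ⟨b, hb⟩ := Nat.factorial_dvd_factorial (show i ≤ n - 1 by omega)
      apply hfac; rw [hb, Nat.cast_mul, h, zero_mul]
    rw [Polynomial.taylor_coeff]
    exact (mul_eq_zero.mp h3).resolve_left hfi
  have hexp := Polynomial.sum_taylor_eq g s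
  rw [← hexp, Polynomial.sum]
  apply Submodule.sum_mem
  intro i hi
  have hi1 : m ≤ i := by
    by_contra h; push_neg at h
    exact (Polynomial.mem_support_iff.mp hi) (htay i h)
  have hi2 : i ≤ m + p - 1 := by
    have h4 : i ≤ (Polynomial.taylor s g).natDegree :=
      Polynomial.le_natDegree_of_ne_zero (Polynomial.mem_support_iff.mp hi)
    rw [Polynomial.natDegree_taylor] at h4
    omega
  have hmem : (X - C s) ^ i ∈ Eplane m p s :=
    Submodule.subset_span ⟨i, ⟨hi1, hi2⟩, rfl⟩
  rw [show C ((Polynomial.taylor s g).coeff i) * (X - C s) ^ i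
      = ((Polynomial.taylor s g).coeff i) • (X - C s) ^ i from (smul_eq_C_mul _).symm]
  exact Submodule.smul_mem _ _ hmem

private lemma pow_dvd_iterate_derivative {s : k} : ∀ (i t : ℕ) (q : k[X]),
    (X - C s) ^ t ∣ q → (X - C s) ^ (t - i) ∣ derivative^[i] q := by
  intro i
  induction i with
  | zero => intro t q h; simpa using h
  | succ i ih =>
    intro t q h
    rw [Function.iterate_succ_apply]
    have h1 : (X - C s) ^ (t - 1) ∣ derivative q := by
      obtain ⟨h', rfl⟩ := h
      rw [derivative_mul, derivative_pow]
      apply dvd_add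
      · apply dvd_mul_of_dvd_left
        apply dvd_mul_of_dvd_left
        exact Dvd.intro_left _ rfl
      · exact dvd_mul_of_dvd_left (pow_dvd_pow _ (Nat.sub_le t 1)) _
    have h2 := ih (t - 1) (derivative q) h1
    rwa [show t - 1 - i = t - (i + 1) by omega] at h2

private lemma inter_to_root {m p n : ℕ} (hm : 1 ≤ m) (hn : n = m + p)
    (f : Fin m → k[X]) {s : k}
    (hne : Submodule.span k (Set.range f) ⊓ Eplane m p s ≠ ⊥) :
    (Wr f).eval s = 0 := by
  classical
  obtain ⟨g, hg, hg0⟩ := (Submodule.ne_bot_iff _).mp hne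
  obtain ⟨hgspan, hgE⟩ := Submodule.mem_inf.mp hg
  obtain ⟨v, hv⟩ := (Submodule.mem_span_range_iff_exists_fun k).mp hgspan
  have hv0 : v ≠ 0 := by
    rintro rfl; apply hg0; rw [← hv]; simp
  have hdvd : (X - C s) ^ m ∣ g := by
    have hle : Eplane m p s ≤ Submodule.restrictScalars k
        (Ideal.span {(X - C s) ^ m}) := by
      rw [Eplane, Submodule.span_le]
      rintro _ ⟨j, ⟨hj1, _⟩, rfl⟩
      show (X - C s) ^ j ∈ Ideal.span {(X - C s) ^ m}
      rw [Ideal.mem_span_singleton]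
      exact pow_dvd_pow _ hj1
    exact Ideal.mem_span_singleton.mp (hle hgE)
  have hder : ∀ i : ℕ, i < m → (derivative^[i] g).eval s = 0 := by
    intro i him
    obtain ⟨h', hh⟩ := pow_dvd_iterate_derivative i m g hdvd
    rw [hh, eval_mul, eval_pow, eval_sub, eval_X, eval_C, sub_self,
      zero_pow (by omega : m - i ≠ 0), zero_mul]
  have hMv : (Matrix.of fun i j : Fin m =>
      (derivative^[(i : ℕ)] (f j)).eval s).mulVec v = 0 := by
    funext i
    have h5 := hder i i.isLt
    rw [← hv, iterate_derivative_combination'] at h5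
    rw [eval_finset_sum] at h5
    simp only [Matrix.mulVec, dotProduct, Matrix.of_apply, Pi.zero_apply]
    rw [← h5]
    refine Finset.sum_congr rfl fun j _ => ?_
    rw [smul_eq_C_mul, eval_mul, eval_C, mul_comm]
  have hdet := Matrix.exists_mulVec_eq_zero_iff.mp ⟨v, hv0, hMv⟩
  rw [eval_Wr, hdet]

private lemma root_to_inter {m p n : ℕ} (hm : 1 ≤ m) (hp : 1 ≤ p) (hn : n = m + p)
    (hfac : ((Nat.factorial (n - 1) : k) ≠ 0))
    (f : Fin m → k[X]) (hli : LinearIndependent k f) (hf : ∀ i, (f i).degree < n)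
    {s : k} (hroot : (Wr f).eval s = 0) :
    Submodule.span k (Set.range f) ⊓ Eplane m p s ≠ ⊥ := by
  classical
  have hdet : (Matrix.of fun i j : Fin m =>
      (derivative^[(i : ℕ)] (f j)).eval s).det = 0 := by
    rw [← eval_Wr, hroot]
  obtain ⟨v, hv0, hMv⟩ := Matrix.exists_mulVec_eq_zero_iff.mpr hdet
  have hg0 : (∑ j, v j • f j) ≠ 0 := by
    intro h
    apply hv0
    funext j
    exact Fintype.linearIndependent_iff.mp hli v h j
  have hgspan : (∑ j, v j • f j) ∈ Submodule.span k (Set.range f) :=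
    Submodule.sum_mem _ fun j _ =>
      Submodule.smul_mem _ _ (Submodule.subset_span ⟨j, rfl⟩)
  have hgdeg : (∑ j, v j • f j).degree < (n : WithBot ℕ) := by
    refine lt_of_le_of_lt (degree_sum_le _ _) ?_
    rw [Finset.sup_lt_iff (by exact_mod_cast WithBot.bot_lt_coe n)]
    intro j _
    exact lt_of_le_of_lt (degree_smul_le _ _) (hf j)
  have hder : ∀ i : ℕ, i < m → (derivative^[i] (∑ j, v j • f j)).eval s = 0 := by
    intro i him
    rw [iterate_derivative_combination', eval_finset_sum]
    have h6 := congrFun hMv ⟨i, him⟩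
    simp only [Matrix.mulVec, dotProduct, Matrix.of_apply, Pi.zero_apply] at h6
    rw [← h6]
    refine Finset.sum_congr rfl fun j _ => ?_
    rw [smul_eq_C_mul, eval_mul, eval_C, mul_comm]
  exact (Submodule.ne_bot_iff _).mpr
    ⟨∑ j, v j • f j, Submodule.mem_inf.mpr
      ⟨hgspan, mem_Eplane_of hm hp hn hfac hgdeg s hder⟩, hg0⟩


variable {k : Type*} [Field k]




private lemma iterate_derivative_sub_smul (t : ℕ) (a b : k[X]) (c : k) :
    derivative^[t] (a - c • b) = derivative^[t] a - c • derivative^[t] b := by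
  induction t with
  | zero => simp
  | succ t ih =>
    rw [Function.iterate_succ_apply', Function.iterate_succ_apply',
      Function.iterate_succ_apply', ih, derivative_sub, derivative_smul]

private lemma wr_key {m p n : ℕ} (hm : 1 ≤ m) (hp : 1 ≤ p) (hn : n = m + p)
    (hfac : ((Nat.factorial (n - 1) : k) ≠ 0)) :
    ∀ (N : ℕ) (f : Fin m → k[X]), (∑ j, (f j).natDegree) = N →
      LinearIndependent k f → (∀ i, (f i).degree < n) →
      Wr f ≠ 0 ∧ (Wr f).degree ≤ (m * p : ℕ) := by
  intro N
  induction N using Nat.strong_induction_on with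
  | _ N ih =>
  intro f hsum hli hf
  classical
  have hne : ∀ j, f j ≠ 0 := fun j => hli.ne_zero j
  have hlc : ∀ j, (f j).leadingCoeff ≠ 0 := fun j => leadingCoeff_ne_zero.mpr (hne j)
  have hnatlt : ∀ j, (f j).natDegree < n := fun j =>
    (natDegree_lt_iff_degree_lt (hne j)).mpr (hf j)
  by_cases hinj : Function.Injective (fun j => (f j).natDegree)
  · -- base case : distinct degrees
    set d : Fin m → ℕ := fun j => (f j).natDegree with hd
    set T : ℕ := ∑ i : Fin m, (i : ℕ) with hT
    set N₀ : ℕ := (∑ j, d j) - T with hN₀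
    set Mk : Matrix (Fin m) (Fin m) k :=
      Matrix.of (fun i j => (((d j).descFactorial (i : ℕ) : k)) * (f j).leadingCoeff) with hMk
    have key1 : ∀ i j : Fin m, (derivative^[(i : ℕ)] (f j)).natDegree ≤ d j - (i : ℕ) :=
      fun i j => natDegree_iterate_derivative _ _
    have key2 : ∀ i j : Fin m,
        (derivative^[(i : ℕ)] (f j)).coeff (d j - (i : ℕ)) = Mk i j := by
      intro i j
      rw [coeff_iterate_derivative]
      rcases le_or_gt (i : ℕ) (d j) with hij | hij
      · rw [Nat.sub_add_cancel hij]
        simp only [Matrix.of_apply, hMk, nsmul_eq_mul]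
        rw [Polynomial.coeff_natDegree]
      · rw [show d j - (i : ℕ) = 0 by omega, zero_add,
          Polynomial.coeff_eq_zero_of_natDegree_lt hij, smul_zero]
        simp only [Matrix.of_apply, hMk]
        rw [Nat.descFactorial_eq_zero_iff_lt.mpr hij]
        simp
    have hperm : ∀ σ : Equiv.Perm (Fin m),
        ((∏ j, derivative^[((σ j : Fin m) : ℕ)] (f j)).coeff N₀ = ∏ j, Mk (σ j) j) ∧
        (∏ j, derivative^[((σ j : Fin m) : ℕ)] (f j)).natDegree ≤ N₀ := by
      intro σ
      by_cases hgood : ∀ j, ((σ j : Fin m) : ℕ) ≤ d j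
      · have hsig : ∑ j, ((σ j : Fin m) : ℕ) = T := Equiv.sum_comp σ (fun i => (i : ℕ))
        have hsub : ∑ j, (d j - ((σ j : Fin m) : ℕ)) = N₀ := by
          rw [Finset.sum_tsub_distrib _ (fun j _ => hgood j), hsig]
        constructor
        · rw [← hsub, coeff_prod' _ _ _ (fun j _ => key1 (σ j) j)]
          exact Finset.prod_congr rfl fun j _ => key2 (σ j) j
        · refine (natDegree_prod_le _ _).trans ?_
          rw [← hsub]
          exact Finset.sum_le_sum fun j _ => key1 (σ j) j
      · push_neg at hgood
        obtain ⟨j0, hj0⟩ := hgood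
        have hz : derivative^[((σ j0 : Fin m) : ℕ)] (f j0) = 0 :=
          iterate_derivative_eq_zero hj0
        have hprod0 : (∏ j, derivative^[((σ j : Fin m) : ℕ)] (f j)) = 0 :=
          Finset.prod_eq_zero (Finset.mem_univ j0) hz
        have hMk0 : Mk (σ j0) j0 = 0 := by
          simp only [hMk, Matrix.of_apply]
          rw [Nat.descFactorial_eq_zero_iff_lt.mpr hj0]
          simp
        constructor
        · rw [hprod0, Polynomial.coeff_zero]
          exact (Finset.prod_eq_zero (f := fun j => Mk (σ j) j) (Finset.mem_univ j0) hMk0).symm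
        · rw [hprod0]; simp
    have hWrdef : Wr f = ∑ σ : Equiv.Perm (Fin m), Equiv.Perm.sign σ •
        ∏ j, derivative^[((σ j : Fin m) : ℕ)] (f j) := by
      rw [Wr, Matrix.det_apply]
      rfl
    have hcoeff : (Wr f).coeff N₀ = Mk.det := by
      rw [hWrdef, Polynomial.finset_sum_coeff, Matrix.det_apply]
      refine Finset.sum_congr rfl fun σ _ => ?_
      rw [Polynomial.coeff_smul, (hperm σ).1]
    have hdegle : (Wr f).natDegree ≤ N₀ := by
      rw [hWrdef]
      refine natDegree_sum_le_of_forall_le _ _ fun σ _ => ?_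
      refine le_trans ?_ (hperm σ).2
      rcases Int.units_eq_one_or (Equiv.Perm.sign σ) with h | h <;>
        simp [h, Units.smul_def]
    -- det Mk ≠ 0
    have hMkdet : Mk.det ≠ 0 := by
      have hfact : Mk = ((Int.castRingHom k).mapMatrix (Matrix.of fun i j : Fin m =>
          ((d j).descFactorial (i : ℕ) : ℤ))) *
          Matrix.diagonal (fun j => (f j).leadingCoeff) := by
        ext i j
        simp [Matrix.mul_diagonal, hMk, RingHom.mapMatrix_apply]
      rw [hfact, Matrix.det_mul, Matrix.det_diagonal, ← RingHom.map_det]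
      apply mul_ne_zero
      · have hz : (Matrix.of fun i j : Fin m => ((d j).descFactorial (i : ℕ) : ℤ)).det =
            (Matrix.vandermonde (fun j : Fin m => (d j : ℤ))).det := by
          rw [Matrix.det_eval_matrixOfPolynomials_eq_det_vandermonde
            (fun j : Fin m => (d j : ℤ)) (fun i => descPochhammer ℤ (i : ℕ))
            (fun i => descPochhammer_natDegree ℤ (i : ℕ))
            (fun i => monic_descPochhammer ℤ (i : ℕ)), ← Matrix.det_transpose]
          congr 1
          ext i j
          simp [Matrix.transpose_apply, descPochhammer_eval_eq_descFactorial]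
        rw [hz, Matrix.det_vandermonde]
        simp only [map_prod]
        apply Finset.prod_ne_zero_iff.mpr
        intro i _
        apply Finset.prod_ne_zero_iff.mpr
        intro j hj
        have hji : j ≠ i := fun h => by simp [h] at hj
        have hdji : d j ≠ d i := fun h => hji (hinj h)
        have hcast : ((d j : k)) ≠ (d i : k) :=
          cast_ne_cast hfac (by have h1 : d j < n := hnatlt j; omega)
            (by have h1 : d i < n := hnatlt i; omega) hdji
        simp only [map_sub, map_natCast]
        exact sub_ne_zero.mpr hcast
      · exact Finset.prod_ne_zero_iff.mpr fun j _ => hlc j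
    have hWr0 : Wr f ≠ 0 := fun h => hMkdet (by rw [← hcoeff, h, Polynomial.coeff_zero])
    -- N₀ ≤ m * p
    have hN₀le : N₀ ≤ m * p := by
      have he : Function.Injective (fun j => (n - 1) - d j) := by
        intro a b hab
        apply hinj
        have h1 : d a < n := hnatlt a
        have h2 : d b < n := hnatlt b
        have hab' : (n - 1) - d a = (n - 1) - d b := hab
        show d a = d b
        omega
      have hTe := sum_triangle_le _ he
      have hsum_de : (∑ j, d j) + (∑ j, ((n - 1) - d j)) = m * (n - 1) := by
        rw [← Finset.sum_add_distrib]
        rw [Finset.sum_congr rfl (fun j _ => show d j + ((n - 1) - d j) = n - 1 by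
          have hjn : d j < n := hnatlt j; omega)]
        simp [Finset.card_univ, mul_comm]
      have h2T : T * 2 = m * (m - 1) := by
        rw [hT, Fin.sum_univ_eq_sum_range (fun i => i) m]
        exact Finset.sum_range_id_mul_two m
      have hmn : m * (n - 1) = m * (m - 1) + m * p := by
        rw [hn, show m + p - 1 = (m - 1) + p by omega, Nat.mul_add]
      rw [hmn] at hsum_de
      set A := ∑ j, d j with hA
      set E := ∑ j, ((n - 1) - d j) with hE
      set P := m * p with hP
      set Q := m * (m - 1) with hQ
      omega
    refine ⟨hWr0, ?_⟩
    rw [degree_eq_natDegree hWr0]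
    exact_mod_cast Nat.cast_le.mpr (hdegle.trans hN₀le)
  · -- reduction step
    rw [Function.not_injective_iff] at hinj
    obtain ⟨j₁, j₂, hdeq, hj12⟩ := hinj
    set c : k := (f j₁).leadingCoeff / (f j₂).leadingCoeff with hc
    have hc0 : c ≠ 0 := div_ne_zero (hlc j₁) (hlc j₂)
    set g : Fin m → k[X] := Function.update f j₁ (f j₁ - c • f j₂) with hgdef
    have hgj₁ : g j₁ = f j₁ - c • f j₂ := Function.update_self _ _ _
    have hgne : ∀ j, j ≠ j₁ → g j = f j := fun j hj => Function.update_of_ne hj _ _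
    -- the sum identity
    have hsum_g : ∀ u : Fin m → k,
        ∑ j, u j • g j = ∑ j, (u j - (Pi.single j₂ (u j₁ * c) : Fin m → k) j) • f j := by
      intro u
      have hL : ∑ j, u j • g j
          = u j₁ • g j₁ + ∑ j ∈ Finset.univ.erase j₁, u j • f j := by
        rw [← Finset.add_sum_erase _ (fun j => u j • g j) (Finset.mem_univ j₁)]
        congr 1
        exact Finset.sum_congr rfl fun j hj =>
          by rw [hgne j (Finset.ne_of_mem_erase hj)]
      have hR : ∑ j, (u j - (Pi.single j₂ (u j₁ * c) : Fin m → k) j) • f j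
          = ∑ j, u j • f j - (u j₁ * c) • f j₂ := by
        rw [Finset.sum_congr rfl (fun j _ => sub_smul (u j) _ (f j)),
          Finset.sum_sub_distrib]
        congr 1
        rw [Finset.sum_eq_single j₂]
        · simp
        · intro j _ hj
          rw [Pi.single_eq_of_ne hj, zero_smul]
        · intro h; exact absurd (Finset.mem_univ j₂) h
      rw [hL, hR, ← Finset.add_sum_erase _ (fun j => u j • f j) (Finset.mem_univ j₁)]
      rw [hgj₁, smul_sub, smul_smul]
      ring
    -- linear independence of g
    have hlig : LinearIndependent k g := by
      rw [Fintype.linearIndependent_iff]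
      intro u hu
      rw [hsum_g u] at hu
      have hw := Fintype.linearIndependent_iff.mp hli _ hu
      have hu1 : u j₁ = 0 := by
        have := hw j₁
        rwa [Pi.single_eq_of_ne hj12, sub_zero] at this
      intro j
      rcases eq_or_ne j j₂ with h | hj
      · rw [h]
        have h7 := hw j₂
        rwa [Pi.single_eq_same, hu1, zero_mul, sub_zero] at h7
      · have h7 := hw j
        rwa [Pi.single_eq_of_ne hj, sub_zero] at h7
    have hgne0 : ∀ j, g j ≠ 0 := fun j => hlig.ne_zero j
    -- degree drop
    have hdlt : (g j₁).degree < (f j₁).degree := by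
      rw [hgj₁]
      refine degree_sub_lt ?_ (hne j₁) ?_
      · rw [smul_eq_C_mul, degree_mul, degree_C hc0, zero_add,
          degree_eq_natDegree (hne j₁), degree_eq_natDegree (hne j₂), hdeq]
      · rw [smul_eq_C_mul, leadingCoeff_mul, leadingCoeff_C, hc,
          div_mul_cancel₀ _ (hlc j₂)]
    have hnatlt' : (g j₁).natDegree < (f j₁).natDegree :=
      natDegree_lt_natDegree (hgne0 j₁) hdlt
    have hdeg' : ∀ i, (g i).degree < (n : WithBot ℕ) := by
      intro i
      rcases eq_or_ne i j₁ with h | hi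
      · rw [h]; exact hdlt.trans (hf j₁)
      · rw [hgne i hi]; exact hf i
    have hsum' : (∑ j, (g j).natDegree) < N := by
      rw [← hsum,
        ← Finset.add_sum_erase _ (fun j => (g j).natDegree) (Finset.mem_univ j₁),
        ← Finset.add_sum_erase _ (fun j => (f j).natDegree) (Finset.mem_univ j₁)]
      have herase : ∑ j ∈ Finset.univ.erase j₁, (g j).natDegree
          = ∑ j ∈ Finset.univ.erase j₁, (f j).natDegree :=
        Finset.sum_congr rfl fun j hj => by rw [hgne j (Finset.ne_of_mem_erase hj)]
      omega
    -- Wronskian invariance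
    have hWr_eq : Wr g = Wr f := by
      rw [Wr, Wr]
      have hmat : (Matrix.of fun i j : Fin m => derivative^[(i : ℕ)] (g j)) =
          Matrix.updateCol (Matrix.of fun i j : Fin m => derivative^[(i : ℕ)] (f j)) j₁
            (fun r => (Matrix.of fun i j : Fin m => derivative^[(i : ℕ)] (f j)) r j₁ +
              (-(C c)) • (Matrix.of fun i j : Fin m => derivative^[(i : ℕ)] (f j)) r j₂) := by
        ext i j
        rw [Matrix.updateCol_apply]
        rcases eq_or_ne j j₁ with rfl | hj
        · rw [if_pos rfl]
          simp only [Matrix.of_apply]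
          rw [hgj₁, iterate_derivative_sub_smul]
          rw [smul_eq_mul, neg_mul, ← smul_eq_C_mul, sub_eq_add_neg]
        · rw [if_neg hj]
          simp only [Matrix.of_apply]
          rw [hgne j hj]
      rw [hmat, Matrix.det_updateCol_add_smul_self _ hj12 (-(C c))]
    obtain ⟨h1, h2⟩ := ih _ hsum' g rfl hlig hdeg'
    rw [hWr_eq] at h1 h2
    exact ⟨h1, h2⟩


end AuxLemmas

theorem wronskian_eq_prod_iff_meets_all_Eplanes {k : Type*} [Field k] (m p n : ℕ)
    (hm : 1 ≤ m) (hp : 1 ≤ p) (hn : n = m + p)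
    (hfac : ((Nat.factorial (n - 1) : k) ≠ 0))
    (f : Fin m → Polynomial k) (hli : LinearIndependent k f)
    (hf : ∀ i, (f i).degree < n)
    (s : Fin (m * p) → k) (hs : Function.Injective s) :
    (∃ c : k, c ≠ 0 ∧
        Wr f = c • ∏ i : Fin (m * p), (Polynomial.X - Polynomial.C (s i))) ↔
      ∀ i : Fin (m * p), Submodule.span k (Set.range f) ⊓ Eplane m p (s i) ≠ ⊥ := by
  classical
  constructor
  · rintro ⟨c, hc, hWr⟩ i
    refine root_to_inter hm hp hn hfac f hli hf ?_
    rw [hWr, smul_eq_C_mul, eval_mul, eval_C]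
    have hzero : (∏ t : Fin (m * p), (X - C (s t))).eval (s i) = 0 := by
      rw [eval_prod]
      refine Finset.prod_eq_zero (Finset.mem_univ i) ?_
      simp
    rw [hzero, mul_zero]
  · intro h
    obtain ⟨hW0, hWdeg⟩ := wr_key hm hp hn hfac (∑ j, (f j).natDegree) f rfl hli hf
    have hroots : ∀ i, (Wr f).IsRoot (s i) := fun i => inter_to_root hm hn f (h i)
    set t : Multiset k := Finset.univ.val.map s with ht
    have htnodup : t.Nodup := Multiset.Nodup.map hs Finset.univ.nodup
    have hle : t ≤ (Wr f).roots := by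
      rw [Multiset.le_iff_count]
      intro a
      by_cases hat : a ∈ t
      · obtain ⟨i, _, rfl⟩ := Multiset.mem_map.mp hat
        rw [Multiset.count_eq_one_of_mem htnodup hat, Polynomial.count_roots]
        exact (Polynomial.rootMultiplicity_pos hW0).mpr (hroots i)
      · rw [Multiset.count_eq_zero_of_notMem hat]
        exact Nat.zero_le _
    have hdvd : (t.map fun a => X - C a).prod ∣ Wr f :=
      (Multiset.prod_dvd_prod_of_le (Multiset.map_le_map hle)).trans
        (prod_multiset_X_sub_C_dvd _)
    have hprodeq : (∏ i : Fin (m * p), (X - C (s i))) = (t.map fun a => X - C a).prod := by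
      rw [ht, Multiset.map_map]
      rfl
    rw [← hprodeq] at hdvd
    obtain ⟨q, hq⟩ := hdvd
    have hP0 : (∏ i : Fin (m * p), (X - C (s i))) ≠ 0 :=
      Finset.prod_ne_zero_iff.mpr fun i _ => X_sub_C_ne_zero (s i)
    have hq0 : q ≠ 0 := by rintro rfl; rw [mul_zero] at hq; exact hW0 hq
    have hPnat : (∏ i : Fin (m * p), (X - C (s i))).natDegree = m * p := by
      rw [natDegree_prod _ _ (fun i _ => X_sub_C_ne_zero (s i))]
      simp [natDegree_X_sub_C]
    have hWnat : (Wr f).natDegree ≤ m * p := natDegree_le_iff_degree_le.mpr hWdeg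
    have hqnat : q.natDegree = 0 := by
      have h8 := natDegree_mul hP0 hq0
      rw [← hq] at h8
      omega
    have hqC : q = C (q.coeff 0) := eq_C_of_natDegree_le_zero (le_of_eq hqnat)
    refine ⟨q.coeff 0, ?_, ?_⟩
    · intro h0
      apply hq0
      rw [hqC, h0, map_zero]
    · rw [hq, smul_eq_C_mul]
      conv_lhs => rw [hqC]
      exact mul_comm _ _
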